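/- In the monoid M presented by generators a, b and the single relation a*b*a = a, the only unit is the identity: if x, y are elements of M with x*y = 1, then x = 1 and y = 1. -/

import Mathlib

/-- The two generators `a` and `b`. -/
inductive Gen : Type
  | a : Gen
  | b : Gen

/-- The single relation `a*b*a = a`. -/
def abaRel : FreeMonoid Gen → FreeMonoid Gen → Prop := fun w₁ w₂ =>
  w₁ = FreeMonoid.of Gen.a * FreeMonoid.of Gen.b * FreeMonoid.of Gen.a ∧
  w₂ = FreeMonoid.of Gen.a

/-- The monoid presented by generators `a, b` and the relation `a*b*a = a`. -/
abbrev M := PresentedMonoid abaRel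

/-- The generator `a` of `M`. -/
def a : M := PresentedMonoid.of abaRel Gen.a

/-- The generator `b` of `M`. -/
def b : M := PresentedMonoid.of abaRel Gen.b

/-- The hom sending every generator to `0 : ℕ` (multiplicatively). -/
def zeroHom : M →* ℕ :=
  PresentedMonoid.lift (fun _ => 0) (by
    rintro w₁ w₂ ⟨rfl, rfl⟩
    simp)

lemma free_lift_zero_eq_one (w : FreeMonoid Gen) :
    FreeMonoid.lift (fun _ : Gen => (0 : ℕ)) w = 1 → w = 1 := by
  induction w using FreeMonoid.recOn with
  | one => intro _; rfl
  | of_mul x w ih =>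
    intro h
    simp [FreeMonoid.lift_eval_of] at h

lemma zeroHom_eq_one (x : M) (h : zeroHom x = 1) : x = 1 := by
  induction x using PresentedMonoid.inductionOn with
  | h w =>
    have : FreeMonoid.lift (fun _ : Gen => (0 : ℕ)) w = 1 := h
    rw [free_lift_zero_eq_one w this]
    rfl

theorem units_of_aba_monoid (x y : M) (h : x * y = 1) : x = 1 ∧ y = 1 := by
  have h' : zeroHom x * zeroHom y = 1 := by rw [← map_mul, h, map_one]
  exact ⟨zeroHom_eq_one x (Nat.eq_one_of_mul_eq_one_right h'),
    zeroHom_eq_one y (Nat.eq_one_of_mul_eq_one_left h')⟩
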